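/- In E_n^B (n ≥ 2), for 1 ≤ k ≤ n and 1 ≤ j ≤ n-1 (whenever the indices occurring make sense) the following hold: (i) 𝕋̄^-_{n,k} T_j = T_j 𝕋̄^-_{n,k} if j < k-1; 𝕋̄^-_{n,k} T_{k-1} = 𝕋̄^-_{n,k-1} + (u - u^{-1}) 𝕋̄^-_{n,k} E_{k-1}; 𝕋̄^-_{n,k} T_k = 𝕋̄^-_{n,k+1}; 𝕋̄^-_{n,k} T_j = T_{j-1} 𝕋̄^-_{n,k} if j > k. (ii) 𝕋̄^+_{n,k} T_j = T_j 𝕋̄^+_{n,k} if j < k-1; 𝕋̄^+_{n,k} T_{k-1} = 𝕋̄^+_{n,k-1}; 𝕋̄^+_{n,k} T_k = 𝕋̄^+_{n,k+1} + (u - u^{-1}) 𝕋̄^+_{n,k} E_k; 𝕋̄^+_{n,k} T_j = T_{j-1} 𝕋̄^+_{n,k} if j > k. (iii) 𝕋̄^-_{n,1} B_1 = 𝕋̄^+_{n,1} + (v - v^{-1}) 𝕋̄^-_{n,1} F_1, and 𝕋̄^-_{n,k} B_1 = B_1 𝕋̄^-_{n,k} for k ≠ 1. (iv) 𝕋̄^+_{n,1}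 B_1 = 𝕋̄^-_{n,1}, and 𝕋̄^+_{n,k} B_1 = B_1 𝕋̄^+_{n,k} for k ≠ 1. -/

import Mathlib

noncomputable section

open scoped Classical

/-- Generators of the bt-algebra of type B (0-indexed: `T i` is the paper's
`T_{i+1}`, `E i` is `E_{i+1}`, `F j` is `F_{j+1}`). -/
inductive BtGen (n : ℕ) : Type
  | B1 : 0 < n → BtGen n
  | T : Fin (n - 1) → BtGen n
  | E : Fin (n - 1) → BtGen n
  | F : Fin n → BtGen n

namespace Bt

variable (R : Type) [Field R] (u v : R) (n : ℕ)

/-- Shorthand for the canonical image of a generator in the free algebra. -/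
def g (x : BtGen n) : FreeAlgebra R (BtGen n) := FreeAlgebra.ι R x

/-- The defining relations of the bt-algebra of type B. -/
inductive Rel : FreeAlgebra R (BtGen n) → FreeAlgebra R (BtGen n) → Prop
  | tt_far (i j : Fin (n - 1)) (h : (i : ℕ) + 1 < (j : ℕ)) :
      Rel (g R n (.T i) * g R n (.T j)) (g R n (.T j) * g R n (.T i))
  | braid (i j : Fin (n - 1)) (h : (j : ℕ) = (i : ℕ) + 1) :
      Rel (g R n (.T i) * g R n (.T j) * g R n (.T i))
          (g R n (.T j) * g R n (.T i) * g R n (.T j))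
  | quadT (i : Fin (n - 1)) :
      Rel (g R n (.T i) * g R n (.T i))
          (1 + algebraMap R _ (u - u⁻¹) * (g R n (.E i) * g R n (.T i)))
  | idemE (i : Fin (n - 1)) : Rel (g R n (.E i) * g R n (.E i)) (g R n (.E i))
  | commEE (i j : Fin (n - 1)) :
      Rel (g R n (.E i) * g R n (.E j)) (g R n (.E j) * g R n (.E i))
  | commET (i : Fin (n - 1)) :
      Rel (g R n (.E i) * g R n (.T i)) (g R n (.T i) * g R n (.E i))
  | commET_far (i j : Fin (n - 1)) (h : (i : ℕ) + 1 < (j : ℕ) ∨ (j : ℕ) + 1 < (i : ℕ)) :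
      Rel (g R n (.E i) * g R n (.T j)) (g R n (.T j) * g R n (.E i))
  | eet (i j : Fin (n - 1)) (h : (j : ℕ) = (i : ℕ) + 1 ∨ (i : ℕ) = (j : ℕ) + 1) :
      Rel (g R n (.E i) * g R n (.E j) * g R n (.T i))
          (g R n (.T i) * (g R n (.E i) * g R n (.E j)))
  | ete (i j : Fin (n - 1)) (h : (j : ℕ) = (i : ℕ) + 1 ∨ (i : ℕ) = (j : ℕ) + 1) :
      Rel (g R n (.E j) * g R n (.T i) * g R n (.E j))
          (g R n (.T i) * (g R n (.E i) * g R n (.E j)))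
  | ett (i j : Fin (n - 1)) (h : (j : ℕ) = (i : ℕ) + 1 ∨ (i : ℕ) = (j : ℕ) + 1) :
      Rel (g R n (.E i) * g R n (.T j) * g R n (.T i))
          (g R n (.T j) * g R n (.T i) * g R n (.E j))
  | bquad (h : 0 < n) (i : Fin (n - 1)) (hi : (i : ℕ) = 0) :
      Rel (g R n (.B1 h) * g R n (.T i) * g R n (.B1 h) * g R n (.T i))
          (g R n (.T i) * g R n (.B1 h) * g R n (.T i) * g R n (.B1 h))
  | commBT (h : 0 < n) (i : Fin (n - 1)) (hi : 0 < (i : ℕ)) :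
      Rel (g R n (.B1 h) * g R n (.T i)) (g R n (.T i) * g R n (.B1 h))
  | quadB (h : 0 < n) (j : Fin n) (hj : (j : ℕ) = 0) :
      Rel (g R n (.B1 h) * g R n (.B1 h))
          (1 + algebraMap R _ (v - v⁻¹) * (g R n (.F j) * g R n (.B1 h)))
  | commBE (h : 0 < n) (i : Fin (n - 1)) :
      Rel (g R n (.B1 h) * g R n (.E i)) (g R n (.E i) * g R n (.B1 h))
  | idemF (j : Fin n) : Rel (g R n (.F j) * g R n (.F j)) (g R n (.F j))
  | commBF (h : 0 < n) (j : Fin n) :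
      Rel (g R n (.B1 h) * g R n (.F j)) (g R n (.F j) * g R n (.B1 h))
  | commFE (j : Fin n) (i : Fin (n - 1)) :
      Rel (g R n (.F j) * g R n (.E i)) (g R n (.E i) * g R n (.F j))
  | ftEq (i : Fin (n - 1)) (j k : Fin n) (hj : (j : ℕ) = (i : ℕ)) (hk : (k : ℕ) = (i : ℕ) + 1) :
      Rel (g R n (.F j) * g R n (.T i)) (g R n (.T i) * g R n (.F k))
  | ftEq' (i : Fin (n - 1)) (j k : Fin n) (hj : (j : ℕ) = (i : ℕ) + 1) (hk : (k : ℕ) = (i : ℕ)) :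
      Rel (g R n (.F j) * g R n (.T i)) (g R n (.T i) * g R n (.F k))
  | ftNe (i : Fin (n - 1)) (j : Fin n) (hj : (j : ℕ) ≠ (i : ℕ) ∧ (j : ℕ) ≠ (i : ℕ) + 1) :
      Rel (g R n (.F j) * g R n (.T i)) (g R n (.T i) * g R n (.F j))
  | eff (i : Fin (n - 1)) (j k : Fin n) (hj : (j : ℕ) = (i : ℕ)) (hk : (k : ℕ) = (i : ℕ) + 1) :
      Rel (g R n (.E i) * g R n (.F j)) (g R n (.F j) * g R n (.F k))
  | eff' (i : Fin (n - 1)) (j k : Fin n) (hj : (j : ℕ) = (i : ℕ)) (hk : (k : ℕ) = (i : ℕ) + 1) :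
      Rel (g R n (.E i) * g R n (.F k)) (g R n (.F j) * g R n (.F k))

/-- The bt-algebra of type B, presented by generators and relations. -/
abbrev EB := RingQuot (Rel R u v n)

/-- The image of a generator in the bt-algebra of type B. -/
def gen (x : BtGen n) : EB R u v n := RingQuot.mkAlgHom R (Rel R u v n) (g R n x)

/-- `tW i` is the paper's braiding generator `T_{i+1}` (out of range: `1`). -/
def tW (i : ℕ) : EB R u v n := if h : i < n - 1 then gen R u v n (.T ⟨i, h⟩) else 1

/-- `eW i` is the paper's tie generator `E_{i+1}` (out of range: `1`). -/
def eW (i : ℕ) : EB R u v n := if h : i < n - 1 then gen R u v n (.E ⟨i, h⟩) else 1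

/-- `fW j` is the paper's framing generator `F_{j+1}` (out of range: `1`). -/
def fW (j : ℕ) : EB R u v n := if h : j < n then gen R u v n (.F ⟨j, h⟩) else 1

/-- The loop generator `B_1`. -/
def bW : EB R u v n := if h : 0 < n then gen R u v n (.B1 h) else 1

/-- The inverse of the braiding generator: `T_i⁻¹ = T_i - (u - u⁻¹) E_i` (0-indexed). -/
def tInv (i : ℕ) : EB R u v n := tW R u v n i - algebraMap R _ (u - u⁻¹) * eW R u v n i

/-- The element `E_{i,j}` of the paper, for 0-indexed `a = i - 1`, `b = j - 1` with `a < b`: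
`E_{i,j} = T_i ⋯ T_{j-2} E_{j-1} T_{j-2}⁻¹ ⋯ T_i⁻¹` (and `E_i` when `j = i+1`). -/
def Epair (a b : ℕ) : EB R u v n :=
  ((List.range (b - a - 1)).map fun k => tW R u v n (a + k)).prod * eW R u v n (b - 1) *
    (((List.range (b - a - 1)).reverse).map fun k => tInv R u v n (a + k)).prod

/-- All pairs of elements of `Fin m` in lexicographic order. -/
def pairList (m : ℕ) : List (Fin m × Fin m) :=
  (List.finRange m).flatMap fun a => (List.finRange m).map fun b => (a, b)

/-- `B_k = T_{k-1} ⋯ T_1 B_1 T_1⁻¹ ⋯ T_{k-1}⁻¹`, paper-indexed (`1 ≤ k ≤ n`). -/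
def bK (k : ℕ) : EB R u v n :=
  (((List.range (k - 1)).reverse).map fun a => tW R u v n a).prod * bW R u v n *
    ((List.range (k - 1)).map fun a => tInv R u v n a).prod

/-- `B̄_k = T_{k-1} ⋯ T_1 B_1 T_1 ⋯ T_{k-1}`, paper-indexed. -/
def bBar (k : ℕ) : EB R u v n :=
  (((List.range (k - 1)).reverse).map fun a => tW R u v n a).prod * bW R u v n *
    ((List.range (k - 1)).map fun a => tW R u v n a).prod

/-- `𝕋⁺_{k,j} = T_{k-1} ⋯ T_j` (and `1` for `j = k`), paper-indexed. -/
def Tp (k j : ℕ) : EB R u v n :=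
  (((List.range (k - j)).reverse).map fun a => tW R u v n (j - 1 + a)).prod

/-- `𝕋⁻_{k,j} = T_{k-1} ⋯ T_j B_j` (and `B_k` for `j = k`), paper-indexed. -/
def Tm (k j : ℕ) : EB R u v n := Tp R u v n k j * bK R u v n j

/-- `𝕋̄⁻_{k,j} = T_{k-1} ⋯ T_j B̄_j` (and `B̄_k` for `j = k`), paper-indexed. -/
def TmBar (k j : ℕ) : EB R u v n := Tp R u v n k j * bBar R u v n j

/-- The product `T_{w_1} ⋯ T_{w_m}` associated to a word in the letters
`{r_1, s_1, …, s_{n-1}}` (letter `0` is `r_1 ↦ B_1`, letter `k ≥ 1` is `s_k ↦ T_k`). -/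
def wordAlg (l : List (Fin n)) : EB R u v n :=
  (l.map fun i => if (i : ℕ) = 0 then bW R u v n else tW R u v n ((i : ℕ) - 1)).prod

end Bt

section Helpers
variable {A : Type} [Monoid A]

lemma swap_tail {a b : A} (h : a * b = b * a) (x : A) : a * (b * x) = b * (a * x) := by
  rw [← mul_assoc, h, mul_assoc]

lemma conj_comm {x t c : A} (h1 : x * t = t * x) (h2 : x * c = c * x) :
    x * (t * c * t) = t * c * t * x := by
  calc x * (t * c * t) = (x * t) * (c * t) := by simp [mul_assoc]
    _ = (t * x) * (c * t) := by rw [h1]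
    _ = t * ((x * c) * t) := by simp [mul_assoc]
    _ = t * ((c * x) * t) := by rw [h2]
    _ = t * c * (x * t) := by simp [mul_assoc]
    _ = t * c * (t * x) := by rw [h1]
    _ = t * c * t * x := by simp [mul_assoc]

lemma key_base {P a b : A} (hbr : b * a * b = a * b * a) (hP : b * P = P * b) :
    P * a * b * a = b * (P * a * b) := by
  calc P * a * b * a = P * (b * a * b) := by rw [hbr]; simp [mul_assoc]
    _ = (P * b) * (a * b) := by simp [mul_assoc]
    _ = (b * P) * (a * b) := by rw [hP]
    _ = b * (P * a * b) := by simp [mul_assoc]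

lemma key_conj {t0 t1 c : A} (hbr : t0 * t1 * t0 = t1 * t0 * t1) (hcb : t1 * c = c * t1) :
    t0 * (t1 * (t0 * c * t0) * t1) = (t1 * (t0 * c * t0) * t1) * t0 := by
  have hbr_t : ∀ x : A, t0 * (t1 * (t0 * x)) = t1 * (t0 * (t1 * x)) := by
    intro x
    rw [← mul_assoc, ← mul_assoc, hbr, mul_assoc, mul_assoc]
  have hbr_r : t0 * (t1 * t0) = t1 * (t0 * t1) := by simpa [mul_assoc] using hbr
  simp only [mul_assoc]
  rw [hbr_t, swap_tail hcb, ← hbr_r]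

end Helpers

namespace Bt

variable (R : Type) [Field R] (u v : R) (n : ℕ)

lemma rel_eq {a b : FreeAlgebra R (BtGen n)} (h : Rel R u v n a b) :
    RingQuot.mkAlgHom R (Rel R u v n) a = RingQuot.mkAlgHom R (Rel R u v n) b :=
  RingQuot.mkAlgHom_rel R h

lemma tt_far' (a b : ℕ) (h : a + 2 ≤ b) :
    tW R u v n a * tW R u v n b = tW R u v n b * tW R u v n a := by
  unfold tW
  split_ifs with ha hb hb
  · have := rel_eq R u v n (Rel.tt_far ⟨a, ha⟩ ⟨b, hb⟩ (by simp; omega))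
    simpa [gen, map_mul] using this
  · simp
  · omega
  · simp

lemma braid' (a b : ℕ) (hb : b = a + 1) (h : b < n - 1) :
    tW R u v n a * tW R u v n b * tW R u v n a
      = tW R u v n b * tW R u v n a * tW R u v n b := by
  have ha : a < n - 1 := by omega
  unfold tW
  rw [dif_pos ha, dif_pos h]
  have := rel_eq R u v n (Rel.braid ⟨a, ha⟩ ⟨b, h⟩ (by simp [hb]))
  simpa [gen, map_mul] using this

lemma quadT' (a : ℕ) (ha : a < n - 1) :
    tW R u v n a * tW R u v n a
      = 1 + (u - u⁻¹) • (eW R u v n a * tW R u v n a) := by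
  unfold tW eW
  simp only [dif_pos ha]
  have := rel_eq R u v n (Rel.quadT (u := u) (v := v) ⟨a, ha⟩)
  simpa [gen, map_mul, Algebra.smul_def] using this

lemma et_comm' (a : ℕ) :
    eW R u v n a * tW R u v n a = tW R u v n a * eW R u v n a := by
  unfold tW eW
  split_ifs with ha
  · have := rel_eq R u v n (Rel.commET (u := u) (v := v) ⟨a, ha⟩)
    simpa [gen, map_mul] using this
  · simp

lemma bt_comm' (a : ℕ) (ha : 1 ≤ a) :
    bW R u v n * tW R u v n a = tW R u v n a * bW R u v n := by
  unfold bW tW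
  split_ifs with h1 h2 h2
  · have := rel_eq R u v n (Rel.commBT (u := u) (v := v) h1 ⟨a, h2⟩ (by show 0 < a; omega))
    simpa [gen, map_mul] using this
  · simp
  · omega
  · simp

lemma bquad' (h : 0 < n - 1) :
    bW R u v n * tW R u v n 0 * bW R u v n * tW R u v n 0
      = tW R u v n 0 * bW R u v n * tW R u v n 0 * bW R u v n := by
  have h0 : 0 < n := by omega
  unfold bW tW
  rw [dif_pos h0, dif_pos h]
  have := rel_eq R u v n (Rel.bquad (u := u) (v := v) h0 ⟨0, h⟩ rfl)
  simpa [gen, map_mul] using this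

lemma quadB' (h : 0 < n) :
    bW R u v n * bW R u v n = 1 + (v - v⁻¹) • (fW R u v n 0 * bW R u v n) := by
  unfold bW fW
  simp only [dif_pos h]
  have := rel_eq R u v n (Rel.quadB (u := u) (v := v) h ⟨0, h⟩ rfl)
  simpa [gen, map_mul, Algebra.smul_def] using this

lemma bf_comm' (j : ℕ) :
    bW R u v n * fW R u v n j = fW R u v n j * bW R u v n := by
  unfold bW fW
  split_ifs with h1 h2 h2
  · have := rel_eq R u v n (Rel.commBF (u := u) (v := v) h1 ⟨j, h2⟩)
    simpa [gen, map_mul] using this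
  · simp
  · simp
  · simp

lemma smul_factor (c : R) (x y : EB R u v n) : x * (c • y) = c • (x * y) := by
  simp only [Algebra.smul_def]
  rw [← mul_assoc, ← Algebra.commutes, mul_assoc]

lemma Tp_of_le (k : ℕ) (h : n ≤ k) : Tp R u v n n k = 1 := by
  simp [Tp, Nat.sub_eq_zero_of_le h]

lemma Tp_succ (j : ℕ) : Tp R u v n n (j + 1) = Tp R u v n n (j + 2) * tW R u v n j := by
  rcases Nat.lt_or_ge j (n - 1) with hj | hj
  · have h1 : n - (j + 1) = (n - (j + 2)) + 1 := by omega
    have hf : (fun a => tW R u v n (j + 1 - 1 + a)) ∘ Nat.succ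
        = fun a => tW R u v n (j + 2 - 1 + a) := by
      funext a
      simp only [Function.comp_apply]
      congr 1
      omega
    rw [Tp, Tp, h1, List.range_succ_eq_map, List.reverse_cons, List.map_append,
      List.prod_append, ← List.map_reverse, List.map_map, hf, List.map_reverse]
    simp only [List.map_cons, List.map_nil, List.prod_cons, List.prod_nil, mul_one]
    congr 1
  · have h3 : tW R u v n j = 1 := by rw [tW, dif_neg (by omega)]
    rw [Tp_of_le R u v n _ (by omega), Tp_of_le R u v n _ (by omega), h3, one_mul]

lemma bBar_one : bBar R u v n 1 = bW R u v n := by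
  simp [bBar]

lemma bBar_succ (m : ℕ) :
    bBar R u v n (m + 2) = tW R u v n m * bBar R u v n (m + 1) * tW R u v n m := by
  rw [bBar, bBar]
  rw [show m + 2 - 1 = m + 1 from rfl, show m + 1 - 1 = m from rfl, List.range_succ]
  simp only [List.reverse_append, List.reverse_cons, List.reverse_nil, List.nil_append,
    List.cons_append, List.map_cons, List.map_append, List.prod_cons, List.prod_append,
    List.prod_nil, mul_one, one_mul, List.map_nil]
  simp [mul_assoc]

/-- `T_b` commutes with `𝕋⁺_{n,k}` when `b + 3 ≤ k`. -/
lemma tW_comm_Tp (b : ℕ) : ∀ d k, n ≤ k + d → b + 3 ≤ k →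
    tW R u v n b * Tp R u v n n k = Tp R u v n n k * tW R u v n b := by
  intro d
  induction d with
  | zero =>
    intro k hk _
    rw [Tp_of_le R u v n _ (by omega)]; simp
  | succ d ih =>
    intro k hk hb
    rcases Nat.lt_or_ge k n with h1 | h1
    · obtain ⟨j, rfl⟩ : ∃ j, k = j + 1 := ⟨k - 1, by omega⟩
      rw [Tp_succ, ← mul_assoc, ih (j + 2) (by omega) (by omega), mul_assoc,
        tt_far' R u v n b j (by omega), ← mul_assoc]
    · rw [Tp_of_le R u v n _ h1]; simp

/-- `B_1` commutes with `𝕋⁺_{n,k}` when `2 ≤ k`. -/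
lemma bW_comm_Tp : ∀ d k, n ≤ k + d → 2 ≤ k →
    bW R u v n * Tp R u v n n k = Tp R u v n n k * bW R u v n := by
  intro d
  induction d with
  | zero =>
    intro k hk _
    rw [Tp_of_le R u v n _ (by omega)]; simp
  | succ d ih =>
    intro k hk hb
    rcases Nat.lt_or_ge k n with h1 | h1
    · obtain ⟨j, rfl⟩ : ∃ j, k = j + 1 := ⟨k - 1, by omega⟩
      rw [Tp_succ, ← mul_assoc, ih (j + 2) (by omega) (by omega), mul_assoc,
        bt_comm' R u v n j (by omega), ← mul_assoc]
    · rw [Tp_of_le R u v n _ h1]; simp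

/-- `𝕋⁺_{n,k} T_{c}` (0-indexed letter `c`) for `k ≤ c`, `c + 2 ≤ n`. -/
lemma Tp_tW_high (c : ℕ) (hc : c + 2 ≤ n) : ∀ d k, c ≤ k + d → 1 ≤ k → k ≤ c →
    Tp R u v n n k * tW R u v n c = tW R u v n (c - 1) * Tp R u v n n k := by
  have base : ∀ k, 1 ≤ k → k = c →
      Tp R u v n n k * tW R u v n c = tW R u v n (c - 1) * Tp R u v n n k := by
    rintro k hk rfl
    obtain ⟨m, rfl⟩ : ∃ m, k = m + 1 := ⟨k - 1, by omega⟩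
    rw [Tp_succ, Tp_succ R u v n (m + 1)]
    simp only [Nat.add_sub_cancel]
    exact key_base (braid' R u v n m (m + 1) rfl (by omega))
      (tW_comm_Tp R u v n m n (m + 3) (by omega) (by omega))
  intro d
  induction d with
  | zero =>
    intro k h1 h2 h3
    exact base k h2 (by omega)
  | succ d ih =>
    intro k h1 h2 h3
    rcases eq_or_lt_of_le h3 with rfl | hlt
    · exact base k h2 rfl
    · obtain ⟨j, rfl⟩ : ∃ j, k = j + 1 := ⟨k - 1, by omega⟩
      rw [Tp_succ, mul_assoc, tt_far' R u v n j c (by omega), ← mul_assoc,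
        ih (j + 2) (by omega) (by omega) (by omega), mul_assoc]

/-- `T_b` commutes with `B̄_k` when `k ≤ b` (0-indexed `b`, paper `k`). -/
lemma tW_comm_bBar_high (b : ℕ) : ∀ k, 1 ≤ k → k ≤ b →
    tW R u v n b * bBar R u v n k = bBar R u v n k * tW R u v n b := by
  intro k
  induction k with
  | zero => omega
  | succ m ih =>
    intro _ hm
    rcases Nat.eq_zero_or_pos m with rfl | hm1
    · rw [bBar_one]
      exact (bt_comm' R u v n b (by omega)).symm
    · obtain ⟨p, rfl⟩ : ∃ p, m = p + 1 := ⟨m - 1, by omega⟩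
      rw [bBar_succ]
      exact conj_comm (tt_far' R u v n p b (by omega)).symm (ih (by omega) (by omega))

/-- `B_1` commutes with `B̄_k`. -/
lemma bW_comm_bBar (k : ℕ) :
    bW R u v n * bBar R u v n k = bBar R u v n k * bW R u v n := by
  induction k with
  | zero => simp [bBar]
  | succ m ih =>
    rcases Nat.eq_zero_or_pos m with rfl | hm1
    · rw [bBar_one]
    · obtain ⟨p, rfl⟩ : ∃ p, m = p + 1 := ⟨m - 1, by omega⟩
      rcases Nat.eq_zero_or_pos p with rfl | hp1
      · rw [bBar_succ, bBar_one]
        rcases Nat.lt_or_ge 0 (n - 1) with h | h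
        · simpa [mul_assoc] using bquad' R u v n h
        · have h3 : tW R u v n 0 = 1 := by rw [tW, dif_neg (by omega)]
          rw [h3]; simp
      · rw [bBar_succ]
        exact conj_comm (bt_comm' R u v n p (by omega)) ih

/-- Key step: `T_b` commutes with `B̄_{b+3}`. -/
lemma tW_comm_bBar_key (b : ℕ) (hb : b + 3 ≤ n) :
    tW R u v n b * bBar R u v n (b + 3) = bBar R u v n (b + 3) * tW R u v n b := by
  have e1 : bBar R u v n (b + 3)
      = tW R u v n (b + 1) * (tW R u v n b * bBar R u v n (b + 1) * tW R u v n b)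
          * tW R u v n (b + 1) := by
    rw [show b + 3 = (b + 1) + 2 by omega, bBar_succ, bBar_succ]
  rw [e1]
  exact key_conj (braid' R u v n b (b + 1) rfl (by omega))
    (tW_comm_bBar_high R u v n (b + 1) (b + 1) (by omega) (by omega))

/-- `T_b` commutes with `B̄_k` when `b + 3 ≤ k ≤ n`. -/
lemma tW_comm_bBar_low (b : ℕ) : ∀ k, b + 3 ≤ k → k ≤ n →
    tW R u v n b * bBar R u v n k = bBar R u v n k * tW R u v n b := by
  intro k
  induction k with
  | zero => omega
  | succ m ih =>
    intro h1 h2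
    rcases eq_or_lt_of_le h1 with he | hlt
    · rw [← he]
      exact tW_comm_bBar_key R u v n b (by omega)
    · obtain ⟨p, rfl⟩ : ∃ p, m = p + 1 := ⟨m - 1, by omega⟩
      rw [bBar_succ]
      exact conj_comm (tt_far' R u v n b p (by omega)) (ih (by omega) (by omega))

end Bt
/-- The field `K = ℂ(u, v)` of rational functions in two indeterminates over `ℂ`. -/
abbrev Kfield : Type := FractionRing (MvPolynomial (Fin 2) ℂ)

/-- The indeterminate `u` of `K = ℂ(u, v)`. -/
def uK : Kfield := algebraMap (MvPolynomial (Fin 2) ℂ) Kfield (MvPolynomial.X 0)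

/-- The indeterminate `v` of `K = ℂ(u, v)`. -/
def vK : Kfield := algebraMap (MvPolynomial (Fin 2) ℂ) Kfield (MvPolynomial.X 1)
open Bt in
/-- The relations of Lemma 1 (`relaciones'`) in `E_n^B`,
for the "bar" elements `𝕋̄^±_{n,k}` (paper-indexed `1 ≤ k ≤ n`, `1 ≤ j ≤ n-1`):
(i) the four commutation/recursion rules of `𝕋̄⁻_{n,k}` with `T_j`;
(ii) the four rules of `𝕋̄⁺_{n,k}` with `T_j`;
(iii)–(iv) the rules for right multiplication by `B_1`.
(`T_j = tW (j-1)`, `E_j = eW (j-1)`, `F_1 = fW 0`, `𝕋̄⁺_{n,k} = Tp n k`,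
`𝕋̄⁻_{n,k} = TmBar n k`.) -/
theorem btB_relaciones_bar (n : ℕ) (hn : 2 ≤ n) :
    (∀ k j : ℕ, 1 ≤ k → k ≤ n → 1 ≤ j → j ≤ n - 1 →
      ((j < k - 1 →
          TmBar Kfield uK vK n n k * tW Kfield uK vK n (j - 1) =
            tW Kfield uK vK n (j - 1) * TmBar Kfield uK vK n n k) ∧
        (j = k - 1 →
          TmBar Kfield uK vK n n k * tW Kfield uK vK n (j - 1) =
            TmBar Kfield uK vK n n (k - 1) +
              (uK - uK⁻¹) • (TmBar Kfield uK vK n n k * eW Kfield uK vK n (j - 1))) ∧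
        (j = k →
          TmBar Kfield uK vK n n k * tW Kfield uK vK n (j - 1) =
            TmBar Kfield uK vK n n (k + 1)) ∧
        (k < j →
          TmBar Kfield uK vK n n k * tW Kfield uK vK n (j - 1) =
            tW Kfield uK vK n (j - 2) * TmBar Kfield uK vK n n k))) ∧
    (∀ k j : ℕ, 1 ≤ k → k ≤ n → 1 ≤ j → j ≤ n - 1 →
      ((j < k - 1 →
          Tp Kfield uK vK n n k * tW Kfield uK vK n (j - 1) =
            tW Kfield uK vK n (j - 1) * Tp Kfield uK vK n n k) ∧
        (j = k - 1 →
          Tp Kfield uK vK n n k * tW Kfield uK vK n (j - 1) =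
            Tp Kfield uK vK n n (k - 1)) ∧
        (j = k →
          Tp Kfield uK vK n n k * tW Kfield uK vK n (j - 1) =
            Tp Kfield uK vK n n (k + 1) +
              (uK - uK⁻¹) • (Tp Kfield uK vK n n k * eW Kfield uK vK n (j - 1))) ∧
        (k < j →
          Tp Kfield uK vK n n k * tW Kfield uK vK n (j - 1) =
            tW Kfield uK vK n (j - 2) * Tp Kfield uK vK n n k))) ∧
    (∀ k : ℕ, 1 ≤ k → k ≤ n →
      ((k = 1 →
          TmBar Kfield uK vK n n 1 * bW Kfield uK vK n =
            Tp Kfield uK vK n n 1 +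
              (vK - vK⁻¹) • (TmBar Kfield uK vK n n 1 * fW Kfield uK vK n 0)) ∧
        (k ≠ 1 →
          TmBar Kfield uK vK n n k * bW Kfield uK vK n =
            bW Kfield uK vK n * TmBar Kfield uK vK n n k))) ∧
    (∀ k : ℕ, 1 ≤ k → k ≤ n →
      ((k = 1 → Tp Kfield uK vK n n 1 * bW Kfield uK vK n = TmBar Kfield uK vK n n 1) ∧
        (k ≠ 1 →
          Tp Kfield uK vK n n k * bW Kfield uK vK n =
            bW Kfield uK vK n * Tp Kfield uK vK n n k))) := by
  have hn0 : 0 < n := by omega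
  refine ⟨?_, ?_, ?_, ?_⟩
  · -- (i) TmBar
    intro k j hk1 hk2 hj1 hj2
    refine ⟨?_, ?_, ?_, ?_⟩
    · -- j < k - 1
      intro h
      simp only [TmBar]
      rw [mul_assoc, ← tW_comm_bBar_low Kfield uK vK n (j - 1) k (by omega) (by omega),
        ← mul_assoc, ← tW_comm_Tp Kfield uK vK n (j - 1) n k (by omega) (by omega),
        mul_assoc]
    · -- j = k - 1
      intro h
      obtain ⟨m, rfl⟩ : ∃ m, k = m + 2 := ⟨k - 2, by omega⟩
      have hj : j = m + 1 := by omega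
      subst hj
      simp only [Nat.add_sub_cancel, show m + 2 - 1 = m + 1 from rfl, TmBar]
      rw [bBar_succ Kfield uK vK n m, Tp_succ Kfield uK vK n m]
      simp only [mul_assoc]
      rw [quadT' Kfield uK vK n m (by omega)]
      simp only [mul_add, mul_one, smul_factor Kfield uK vK n]
      rw [← et_comm' Kfield uK vK n m]
    · -- j = k
      intro h
      subst h
      obtain ⟨m, rfl⟩ : ∃ m, j = m + 1 := ⟨j - 1, by omega⟩
      simp only [Nat.add_sub_cancel, TmBar]
      rw [bBar_succ, Tp_succ]
      simp only [mul_assoc]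
    · -- k < j
      intro h
      simp only [TmBar]
      rw [show j - 2 = j - 1 - 1 by omega, mul_assoc,
        ← tW_comm_bBar_high Kfield uK vK n (j - 1) k (by omega) (by omega),
        ← mul_assoc,
        Tp_tW_high Kfield uK vK n (j - 1) (by omega) n k (by omega) (by omega) (by omega),
        mul_assoc]
  · -- (ii) Tp
    intro k j hk1 hk2 hj1 hj2
    refine ⟨?_, ?_, ?_, ?_⟩
    · intro h
      exact (tW_comm_Tp Kfield uK vK n (j - 1) n k (by omega) (by omega)).symm
    · intro h
      obtain ⟨m, rfl⟩ : ∃ m, k = m + 2 := ⟨k - 2, by omega⟩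
      have hj : j = m + 1 := by omega
      subst hj
      simp only [Nat.add_sub_cancel]
      exact (Tp_succ Kfield uK vK n m).symm
    · intro h
      subst h
      obtain ⟨m, rfl⟩ : ∃ m, j = m + 1 := ⟨j - 1, by omega⟩
      simp only [Nat.add_sub_cancel]
      rw [Tp_succ, mul_assoc, quadT' Kfield uK vK n m (by omega), mul_add, mul_one,
        smul_factor Kfield uK vK n _ _ _, et_comm' Kfield uK vK n m, ← mul_assoc]
    · intro h
      rw [show j - 2 = j - 1 - 1 by omega]
      exact Tp_tW_high Kfield uK vK n (j - 1) (by omega) n k (by omega) (by omega) (by omega)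
  · -- (iii)
    intro k hk1 hk2
    constructor
    · intro _
      simp only [TmBar]
      rw [bBar_one, mul_assoc, quadB' Kfield uK vK n hn0, mul_add, mul_one, smul_factor Kfield uK vK n _ _ _,
        mul_assoc, bf_comm' Kfield uK vK n 0]
    · intro hne
      simp only [TmBar]
      rw [mul_assoc, ← bW_comm_bBar Kfield uK vK n k, ← mul_assoc,
        ← bW_comm_Tp Kfield uK vK n n k (by omega) (by omega), mul_assoc]
  · -- (iv)
    intro k hk1 hk2
    constructor
    · intro _
      simp only [TmBar]
      rw [bBar_one]
    · intro hne
      exact (bW_comm_Tp Kfield uK vK n n k (by omega) (by omega)).symm
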